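/- Welch bound: Let v_1, …, v_d be unit vectors in ℝ^n. Then (1/d²) · Σ_{(i,j) ∈ [d]×[d]} ⟨v_i, v_j⟩² ≥ 1/n. -/

import Mathlib

open scoped BigOperators RealInnerProductSpace

lemma sum_swap4 {M : Type*} [AddCommMonoid M] {a b c e : ℕ}
    (f : Fin a → Fin b → Fin c → Fin e → M) :
    ∑ i, ∑ j, ∑ k, ∑ l, f i j k l = ∑ k, ∑ l, ∑ i, ∑ j, f i j k l := by
  calc ∑ i, ∑ j, ∑ k, ∑ l, f i j k l
      = ∑ i, ∑ k, ∑ j, ∑ l, f i j k l :=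
        Finset.sum_congr rfl fun i _ => Finset.sum_comm
    _ = ∑ k, ∑ i, ∑ j, ∑ l, f i j k l := Finset.sum_comm
    _ = ∑ k, ∑ i, ∑ l, ∑ j, f i j k l :=
        Finset.sum_congr rfl fun k _ => Finset.sum_congr rfl fun i _ => Finset.sum_comm
    _ = ∑ k, ∑ l, ∑ i, ∑ j, f i j k l :=
        Finset.sum_congr rfl fun k _ => Finset.sum_comm

/-- Welch bound: for unit vectors `v_1, …, v_d` in `ℝ^n`, the average squared inner
product `(1/d²) Σ_{i,j} ⟨v_i, v_j⟩²` is at least `1/n`. -/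
theorem welch_bound {n d : ℕ} (hd : 0 < d) (v : Fin d → EuclideanSpace ℝ (Fin n))
    (hv : ∀ i, ‖v i‖ = 1) :
    (1 : ℝ) / n ≤ (1 / (d : ℝ) ^ 2) * ∑ i, ∑ j, ⟪v i, v j⟫ ^ 2 := by
  have hS0 : (0:ℝ) ≤ ∑ i, ∑ j, ⟪v i, v j⟫ ^ 2 := by positivity
  rcases Nat.eq_zero_or_pos n with hn | hn
  · subst hn
    simp only [Nat.cast_zero, div_zero]
    positivity
  set T : Fin n → Fin n → ℝ := fun k l => ∑ i, v i k * v i l with hT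
  have key : ∑ i, ∑ j, ⟪v i, v j⟫ ^ 2 = ∑ k, ∑ l, (T k l) ^ 2 := by
    simp only [hT, PiLp.inner_apply, RCLike.inner_apply, conj_trivial, sq,
      Finset.sum_mul_sum]
    rw [sum_swap4 (fun i j k l => v j k * v i k * (v j l * v i l))]
    exact Finset.sum_congr rfl fun k _ => Finset.sum_congr rfl fun l _ =>
      Finset.sum_congr rfl fun i _ => Finset.sum_congr rfl fun j _ => by ring
  have htr : ∑ k, T k k = (d : ℝ) := by
    simp only [hT]
    rw [Finset.sum_comm]
    have : ∀ i, ∑ k, v i k * v i k = 1 := by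
      intro i
      have h := real_inner_self_eq_norm_sq (v i)
      rw [hv i] at h
      rw [PiLp.inner_apply] at h
      simpa only [RCLike.inner_apply, conj_trivial, one_pow] using h
    simp [this]
  have hcs : ((d : ℝ)) ^ 2 ≤ (n : ℝ) * ∑ k, ∑ l, (T k l) ^ 2 := by
    calc ((d : ℝ)) ^ 2 = (∑ k, T k k) ^ 2 := by rw [htr]
      _ ≤ (Finset.univ.card : ℝ) * ∑ k : Fin n, (T k k) ^ 2 := by
          exact_mod_cast sq_sum_le_card_mul_sum_sq (s := Finset.univ) (f := fun k => T k k)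
      _ ≤ (n : ℝ) * ∑ k, ∑ l, (T k l) ^ 2 := by
          rw [Finset.card_univ, Fintype.card_fin]
          refine mul_le_mul_of_nonneg_left (Finset.sum_le_sum fun k _ => ?_) (by positivity)
          exact Finset.single_le_sum (f := fun l => T k l ^ 2)
            (fun l _ => sq_nonneg _) (Finset.mem_univ k)
  have hd2 : (0:ℝ) < (d:ℝ)^2 := by positivity
  rw [key, div_le_iff₀ (by positivity : (0:ℝ) < (n:ℝ)), one_div, inv_mul_eq_div,
    div_mul_eq_mul_div, le_div_iff₀ hd2, one_mul, mul_comm]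
  exact hcs
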